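/- Let n ≥ 1, 2 < p < ∞, let Ω ⊂ ℝⁿ be a bounded open set, T > 0, ε > 0, and M ≥ 0. Suppose u : ℝⁿ × ℝ → ℝ is a bounded Borel measurable function satisfying the DPP with parameter ε at every point (x,t) ∈ Ω × (0,T], and |u(y,s)| ≤ M for every point (y,s) ∉ Ω × (0,T]. Then |u(x,t)| ≤ M for every (x,t) ∈ ℝⁿ × ℝ. -/

import Mathlib

open MeasureTheory Metric Set

/-- `u` satisfies the dynamic programming principle with parameter `ε` at `(x,t)`:
`u(x,t) = β ⨍_{B_ε(x)} u(y,t−ε²) dy + α sup_{|σ|=1} (u(x+εσ,t−ε²)+u(x−εσ,t−ε²))/2`,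
where `α = (p−2)/(p+n)`, `β = (n+2)/(p+n)`. -/
def SatisfiesDPPAt (n : ℕ) (p ε : ℝ) (u : EuclideanSpace ℝ (Fin n) × ℝ → ℝ)
    (x : EuclideanSpace ℝ (Fin n)) (t : ℝ) : Prop :=
  u (x, t) = (((n : ℝ) + 2) / (p + n)) * (⨍ y in ball x ε, u (y, t - ε ^ 2)) +
    ((p - 2) / (p + n)) *
      (⨆ σ : sphere (0 : EuclideanSpace ℝ (Fin n)) 1,
        (u (x + ε • (σ : EuclideanSpace ℝ (Fin n)), t - ε ^ 2) +
         u (x - ε • (σ : EuclideanSpace ℝ (Fin n)), t - ε ^ 2)) / 2)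

/-- **Maximum principle for the DPP**: a bounded Borel function satisfying the DPP in
`Ω × (0,T]` and bounded by `M` in absolute value outside `Ω × (0,T]` is bounded by `M`
everywhere. -/
theorem dpp_bound
    (n : ℕ) (hn : 1 ≤ n) (p : ℝ) (hp : 2 < p)
    (Ω : Set (EuclideanSpace ℝ (Fin n))) (hΩo : IsOpen Ω)
    (hΩb : Bornology.IsBounded Ω) (T : ℝ) (hT : 0 < T) (ε : ℝ) (hε : 0 < ε) (M : ℝ) (hM : 0 ≤ M)
    (u : EuclideanSpace ℝ (Fin n) × ℝ → ℝ)
    (hu_bd : ∃ C : ℝ, ∀ q, |u q| ≤ C) (hu_meas : Measurable u)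
    (hu_dpp : ∀ x ∈ Ω, ∀ t ∈ Ioc (0 : ℝ) T, SatisfiesDPPAt n p ε u x t)
    (hbdry : ∀ q : EuclideanSpace ℝ (Fin n) × ℝ, q ∉ Ω ×ˢ Ioc (0 : ℝ) T → |u q| ≤ M) :
    ∀ q : EuclideanSpace ℝ (Fin n) × ℝ, |u q| ≤ M := by
  haveI : Nonempty (Fin n) := ⟨⟨0, hn⟩⟩
  haveI : Nontrivial (EuclideanSpace ℝ (Fin n)) := by
    infer_instance
  have hpn : (0 : ℝ) < p + n := by
    have : (0:ℝ) ≤ n := Nat.cast_nonneg n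
    linarith
  have hβ : 0 ≤ ((n : ℝ) + 2) / (p + n) := by positivity
  have hα : 0 ≤ (p - 2) / (p + n) := by
    apply div_nonneg <;> linarith
  have hsum : ((n : ℝ) + 2) / (p + n) * M + (p - 2) / (p + n) * M = M := by
    field_simp; ring
  have hε2 : 0 < ε ^ 2 := by positivity
  -- key induction
  have key : ∀ k : ℕ, ∀ q : EuclideanSpace ℝ (Fin n) × ℝ, q.2 ≤ k * ε ^ 2 → |u q| ≤ M := by
    intro k
    induction k with
    | zero =>
      intro q hq
      apply hbdry
      intro hmem
      have : (0:ℝ) < q.2 := hmem.2.1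
      simp only [Nat.cast_zero, zero_mul] at hq
      linarith
    | succ k ih =>
      intro q hq
      by_cases hmem : q ∈ Ω ×ˢ Ioc (0 : ℝ) T
      · obtain ⟨x, t⟩ := q
        have hx : x ∈ Ω := hmem.1
        have ht : t ∈ Ioc (0 : ℝ) T := hmem.2
        have hdpp := hu_dpp x hx t ht
        rw [SatisfiesDPPAt] at hdpp
        have hprev : ∀ y : EuclideanSpace ℝ (Fin n), |u (y, t - ε ^ 2)| ≤ M := by
          intro y
          apply ih (y, t - ε ^ 2)
          simp only
          push_cast at hq ⊢
          linarith
        -- average bound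
        have hvol : (0:ℝ) < (volume (ball x ε)).toReal := by
          have h1 : volume (ball x ε) ≠ 0 := (measure_ball_pos volume x hε).ne'
          have h2 : volume (ball x ε) ≠ ⊤ := measure_ball_lt_top.ne
          exact ENNReal.toReal_pos h1 h2
        have havg : |⨍ y in ball x ε, u (y, t - ε ^ 2)| ≤ M := by
          rw [setAverage_eq]
          have hI : ‖∫ y in ball x ε, u (y, t - ε ^ 2)‖ ≤
              M * (volume (ball x ε)).toReal := by
            apply norm_setIntegral_le_of_norm_le_const measure_ball_lt_top
            · intro y _
              simpa using hprev y
          rw [smul_eq_mul, abs_mul, abs_inv, measureReal_def, abs_of_nonneg hvol.le]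
          rw [Real.norm_eq_abs] at hI
          rw [inv_mul_le_iff₀ hvol]
          linarith [hI]
        -- sup bound
        set g : sphere (0 : EuclideanSpace ℝ (Fin n)) 1 → ℝ := fun σ =>
          (u (x + ε • (σ : EuclideanSpace ℝ (Fin n)), t - ε ^ 2) +
           u (x - ε • (σ : EuclideanSpace ℝ (Fin n)), t - ε ^ 2)) / 2 with hg
        have hgb : ∀ σ, |g σ| ≤ M := by
          intro σ
          rw [hg]
          have h1 := hprev (x + ε • (σ : EuclideanSpace ℝ (Fin n)))
          have h2 := hprev (x - ε • (σ : EuclideanSpace ℝ (Fin n)))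
          rw [abs_le] at h1 h2 ⊢
          exact ⟨by linarith [h1.1, h2.1], by linarith [h1.2, h2.2]⟩
        haveI hne : Nonempty (sphere (0 : EuclideanSpace ℝ (Fin n)) 1) := by
          rw [nonempty_coe_sort, NormedSpace.sphere_nonempty]
          norm_num
        have hbdd : BddAbove (Set.range g) := by
          refine ⟨M, ?_⟩
          rintro _ ⟨σ, rfl⟩
          exact (abs_le.mp (hgb σ)).2
        have hsup_le : (⨆ σ, g σ) ≤ M := ciSup_le fun σ => (abs_le.mp (hgb σ)).2
        have hsup_ge : -M ≤ (⨆ σ, g σ) := by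
          obtain ⟨σ₀⟩ := hne
          exact le_trans (abs_le.mp (hgb σ₀)).1 (le_ciSup hbdd σ₀)
        have hsupabs : |⨆ σ, g σ| ≤ M := abs_le.mpr ⟨hsup_ge, hsup_le⟩
        calc |u (x, t)| = |(((n : ℝ) + 2) / (p + n)) * (⨍ y in ball x ε, u (y, t - ε ^ 2)) +
            ((p - 2) / (p + n)) * (⨆ σ, g σ)| := by rw [hdpp]
          _ ≤ (((n : ℝ) + 2) / (p + n)) * |⨍ y in ball x ε, u (y, t - ε ^ 2)| +
              ((p - 2) / (p + n)) * |⨆ σ, g σ| := by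
            refine (abs_add_le _ _).trans ?_
            rw [abs_mul, abs_mul, abs_of_nonneg hβ, abs_of_nonneg hα]
          _ ≤ (((n : ℝ) + 2) / (p + n)) * M + ((p - 2) / (p + n)) * M := by
            gcongr
          _ = M := hsum
      · exact hbdry q hmem
  intro q
  obtain ⟨k, hk⟩ := exists_nat_ge (q.2 / ε ^ 2)
  apply key k
  rw [div_le_iff₀ hε2] at hk
  linarith
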